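/- arXiv:1208.2757 — 3 statements merged into one kernel-verified Lean document; each statement's English description precedes it below -/
import Mathlib

section
/- For the (v₋,v₊)-gliders automaton F with v₋ < 0 ≤ v₊, for all j ∈ ℤ and all n ≥ 1: M_{F(a)}(j) < min over {j+1,...,j+n} of M_{F(a)} if and only if M_a(j-v₊) < min over {j+1-v₊,...,j+n-v₋} of M_a. -/
open scoped Classical

/-- The (v₋,v₊)-gliders automaton on alphabet {-1,0,+1} ⊆ ℤ. -/
noncomputable def glider (vm vp : ℤ) (a : ℤ → ℤ) : ℤ → ℤ := fun j =>
  if a (j - vp) = 1 ∧ (∀ N : ℤ, N ≤ -vm → 0 ≤ ∑ t ∈ Finset.Icc (-vp + 1) N, a (j + t)) then 1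
  else if a (j - vm) = -1 ∧ (∀ N : ℤ, -vp ≤ N → (∑ t ∈ Finset.Icc N (-vm - 1), a (j + t)) ≤ 0) then -1
  else 0

private lemma sum_eq_sub {a M : ℤ → ℤ} (hM : ∀ k, M (k + 1) = M k + a k) :
    ∀ (n : ℕ) (p : ℤ), ∑ m ∈ Finset.Icc p (p + n - 1), a m = M (p + n) - M p := by
  intro n
  induction n with
  | zero => intro p; simp
  | succ n ih =>
    intro p
    have hins : Finset.Icc p (p + ((n : ℤ) + 1) - 1) = insert (p + n) (Finset.Icc p (p + n - 1)) := by
      ext x; simp only [Finset.mem_Icc, Finset.mem_insert]; omega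
    push_cast
    rw [hins, Finset.sum_insert (by simp only [Finset.mem_Icc]; omega), ih p]
    have h1 := hM (p + n)
    have h2 : p + ((n : ℤ) + 1) = (p + n) + 1 := by ring
    rw [h2, h1]; ring

private lemma sum_Icc_M {a M : ℤ → ℤ} (hM : ∀ k, M (k + 1) = M k + a k)
    {p q : ℤ} (h : p ≤ q + 1) : ∑ m ∈ Finset.Icc p q, a m = M (q + 1) - M p := by
  obtain ⟨n, hn⟩ : ∃ n : ℕ, q + 1 = p + n := ⟨(q + 1 - p).toNat, by omega⟩
  have hq : q = p + (n : ℤ) - 1 := by omega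
  subst hq
  rw [show p + (n : ℤ) - 1 + 1 = p + n by ring]
  exact sum_eq_sub hM n p

private lemma sum_Icc_shift {a M : ℤ → ℤ} (hM : ∀ k, M (k + 1) = M k + a k)
    (k : ℤ) {l N : ℤ} (h : l ≤ N + 1) :
    ∑ t ∈ Finset.Icc l N, a (k + t) = M (k + (N + 1)) - M (k + l) := by
  have hM' : ∀ t, M (k + (t + 1)) = M (k + t) + a (k + t) := by
    intro t; rw [show k + (t + 1) = (k + t) + 1 by ring]; exact hM (k + t)
  exact sum_Icc_M (a := fun t => a (k + t)) (M := fun t => M (k + t)) hM' h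

private lemma branch1_iff {vm vp : ℤ} (hvm : vm < 0) (hvp : 0 ≤ vp)
    {a M : ℤ → ℤ} (ha : ∀ k, a k = -1 ∨ a k = 0 ∨ a k = 1)
    (hM : ∀ k, M (k + 1) = M k + a k) (k : ℤ) :
    (a (k - vp) = 1 ∧ (∀ N : ℤ, N ≤ -vm → 0 ≤ ∑ t ∈ Finset.Icc (-vp + 1) N, a (k + t))) ↔
      (∀ m ∈ Finset.Icc (k - vp + 1) (k - vm + 1), M (k - vp) < M m) := by
  have e1 := hM (k - vp)
  constructor
  · rintro ⟨h1, h2⟩ m hm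
    simp only [Finset.mem_Icc] at hm
    rcases eq_or_lt_of_le hm.1 with heq | hlt
    · rw [← heq]; omega
    · set N := m - k - 1 with hN
      have hs := h2 N (by omega)
      rw [sum_Icc_shift hM k (by omega)] at hs
      rw [show k + (N + 1) = m by omega, show k + (-vp + 1) = (k - vp) + 1 by ring] at hs
      omega
  · intro h
    have h1 := h (k - vp + 1) (by simp only [Finset.mem_Icc]; omega)
    have e2 : a (k - vp) = 1 := by rcases ha (k - vp) with h' | h' | h' <;> omega
    refine ⟨e2, fun N hN => ?_⟩
    rcases le_or_gt N (-vp) with hle | hlt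
    · rw [Finset.Icc_eq_empty (by omega)]; simp
    · rw [sum_Icc_shift hM k (by omega)]
      have hm := h (k + (N + 1)) (by simp only [Finset.mem_Icc]; omega)
      rw [show k + (-vp + 1) = (k - vp) + 1 by ring]
      omega

private lemma branch2_iff {vm vp : ℤ} (hvm : vm < 0) (hvp : 0 ≤ vp)
    {a M : ℤ → ℤ} (ha : ∀ k, a k = -1 ∨ a k = 0 ∨ a k = 1)
    (hM : ∀ k, M (k + 1) = M k + a k) (k : ℤ) :
    (a (k - vm) = -1 ∧ (∀ N : ℤ, -vp ≤ N → (∑ t ∈ Finset.Icc N (-vm - 1), a (k + t)) ≤ 0)) ↔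
      (∀ m ∈ Finset.Icc (k - vp) (k - vm), M (k - vm + 1) < M m) := by
  have e1 := hM (k - vm)
  constructor
  · rintro ⟨h1, h2⟩ m hm
    simp only [Finset.mem_Icc] at hm
    rcases eq_or_lt_of_le hm.2 with heq | hlt
    · rw [heq]; omega
    · set N := m - k with hN
      have hs := h2 N (by omega)
      rw [sum_Icc_shift hM k (by omega)] at hs
      rw [show k + (-vm - 1 + 1) = k - vm by ring, show k + N = m by omega] at hs
      omega
  · intro h
    have h1 := h (k - vm) (by simp only [Finset.mem_Icc]; omega)
    have e2 : a (k - vm) = -1 := by rcases ha (k - vm) with h' | h' | h' <;> omega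
    refine ⟨e2, fun N hN => ?_⟩
    rcases le_or_gt (-vm) N with hle | hlt
    · rw [Finset.Icc_eq_empty (by omega)]; simp
    · rw [sum_Icc_shift hM k (by omega)]
      have hm := h (k + N) (by simp only [Finset.mem_Icc]; omega)
      rw [show k + (-vm - 1 + 1) = k - vm by ring]
      omega

noncomputable def Gf (vm vp : ℤ) (h : vm ≤ vp) (M : ℤ → ℤ) (k : ℤ) : ℤ :=
  (Finset.Icc (k - vp) (k - vm)).inf' (Finset.nonempty_Icc.mpr (by omega)) M

private lemma Gf_le {vm vp : ℤ} (h : vm ≤ vp) (M : ℤ → ℤ) {k m : ℤ}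
    (hm : k - vp ≤ m ∧ m ≤ k - vm) : Gf vm vp h M k ≤ M m :=
  Finset.inf'_le M (Finset.mem_Icc.mpr hm)

private lemma le_Gf {vm vp : ℤ} (h : vm ≤ vp) (M : ℤ → ℤ) {k : ℤ} {c : ℤ}
    (hc : ∀ m, k - vp ≤ m → m ≤ k - vm → c ≤ M m) : c ≤ Gf vm vp h M k := by
  unfold Gf
  exact Finset.le_inf' _ M (fun m hm => by
    simp only [Finset.mem_Icc] at hm; exact hc m hm.1 hm.2)

private lemma Gf_exists {vm vp : ℤ} (h : vm ≤ vp) (M : ℤ → ℤ) (k : ℤ) :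
    ∃ m, (k - vp ≤ m ∧ m ≤ k - vm) ∧ Gf vm vp h M k = M m := by
  obtain ⟨m, hm, he⟩ := Finset.exists_mem_eq_inf' (Finset.nonempty_Icc.mpr
    (by omega : k - vp ≤ k - vm)) M
  exact ⟨m, Finset.mem_Icc.mp hm, he⟩

private lemma glider_eq_G {vm vp : ℤ} (hvm : vm < 0) (hvp : 0 ≤ vp)
    {a M : ℤ → ℤ} (ha : ∀ k, a k = -1 ∨ a k = 0 ∨ a k = 1)
    (hM : ∀ k, M (k + 1) = M k + a k) (k : ℤ) :
    glider vm vp a k = Gf vm vp (by omega) M (k + 1) - Gf vm vp (by omega) M k := by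
  have hle : vm ≤ vp := by omega
  unfold glider
  by_cases hb1 : a (k - vp) = 1 ∧ (∀ N : ℤ, N ≤ -vm → 0 ≤ ∑ t ∈ Finset.Icc (-vp + 1) N, a (k + t))
  · rw [if_pos hb1]
    have P1 := (branch1_iff hvm hvp ha hM k).mp hb1
    simp only [Finset.mem_Icc] at P1
    have gk : Gf vm vp hle M k = M (k - vp) := by
      refine le_antisymm (Gf_le hle M ⟨le_refl _, by omega⟩) (le_Gf hle M fun m h1 h2 => ?_)
      rcases eq_or_lt_of_le h1 with heq | hlt
      · rw [← heq]
      · exact le_of_lt (P1 m ⟨by omega, by omega⟩)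
    have gk1 : Gf vm vp hle M (k + 1) = M (k - vp) + 1 := by
      have e1 := hM (k - vp)
      refine le_antisymm ?_ (le_Gf hle M fun m h1 h2 =>
        by have := P1 m ⟨by omega, by omega⟩; omega)
      have := Gf_le hle M (k := k + 1) (m := k - vp + 1) ⟨by omega, by omega⟩
      omega
    omega
  · rw [if_neg hb1]
    by_cases hb2 : a (k - vm) = -1 ∧
        (∀ N : ℤ, -vp ≤ N → (∑ t ∈ Finset.Icc N (-vm - 1), a (k + t)) ≤ 0)
    · rw [if_pos hb2]
      have P2 := (branch2_iff hvm hvp ha hM k).mp hb2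
      simp only [Finset.mem_Icc] at P2
      have e1 := hM (k - vm)
      have gk1 : Gf vm vp hle M (k + 1) = M (k - vm + 1) := by
        refine le_antisymm (Gf_le hle M ⟨by omega, by omega⟩) (le_Gf hle M fun m h1 h2 => ?_)
        rcases eq_or_lt_of_le h2 with heq | hlt
        · rw [heq, show k + 1 - vm = k - vm + 1 by ring]
        · exact le_of_lt (P2 m ⟨by omega, by omega⟩)
      have gk : Gf vm vp hle M k = M (k - vm + 1) + 1 := by
        refine le_antisymm ?_ (le_Gf hle M fun m h1 h2 =>
          by have := P2 m ⟨by omega, by omega⟩; omega)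
        have := Gf_le hle M (k := k) (m := k - vm) ⟨by omega, le_refl _⟩
        omega
      omega
    · rw [if_neg hb2]
      have hP1 := (not_iff_not.mpr (branch1_iff hvm hvp ha hM k)).mp hb1
      have hP2 := (not_iff_not.mpr (branch2_iff hvm hvp ha hM k)).mp hb2
      push_neg at hP1 hP2
      obtain ⟨m, hmmem, hmle⟩ := hP1
      obtain ⟨m', hm'mem, hm'le⟩ := hP2
      simp only [Finset.mem_Icc] at hmmem hm'mem
      have hle1 : Gf vm vp hle M (k + 1) ≤ Gf vm vp hle M k := by
        obtain ⟨m0, hm0, he0⟩ := Gf_exists hle M k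
        rcases eq_or_lt_of_le hm0.1 with heq | hlt
        · have h1 : Gf vm vp hle M (k + 1) ≤ M m := Gf_le hle M ⟨by omega, by omega⟩
          rw [he0, ← heq]
          omega
        · rw [he0]
          exact Gf_le hle M ⟨by omega, by omega⟩
      have hle2 : Gf vm vp hle M k ≤ Gf vm vp hle M (k + 1) := by
        obtain ⟨m1, hm1, he1⟩ := Gf_exists hle M (k + 1)
        rcases eq_or_lt_of_le hm1.2 with heq | hlt
        · have h1 : Gf vm vp hle M k ≤ M m' := Gf_le hle M ⟨by omega, by omega⟩
          rw [he1, show m1 = k - vm + 1 by omega]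
          omega
        · rw [he1]
          exact Gf_le hle M ⟨by omega, by omega⟩
      omega

private lemma MF_eq_G {vm vp : ℤ} (hvm : vm < 0) (hvp : 0 ≤ vp)
    {a M MF : ℤ → ℤ} (ha : ∀ k, a k = -1 ∨ a k = 0 ∨ a k = 1)
    (hM : ∀ k, M (k + 1) = M k + a k)
    (hMF0 : MF 0 = 0) (hMF : ∀ k, MF (k + 1) = MF k + glider vm vp a k) :
    ∀ k : ℤ, MF k = Gf vm vp (by omega) M k - Gf vm vp (by omega) M 0 := by
  have hle : vm ≤ vp := by omega
  intro k
  induction k using Int.induction_on with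
  | zero => omega
  | succ i ih =>
    have h1 := hMF i
    have h2 := glider_eq_G hvm hvp ha hM i
    push_cast at *
    omega
  | pred i ih =>
    have h1 := hMF (-(i : ℤ) - 1)
    have h2 := glider_eq_G hvm hvp ha hM (-(i : ℤ) - 1)
    rw [show -(i : ℤ) - 1 + 1 = -(i : ℤ) by ring] at h1 h2
    push_cast at *
    omega

theorem stmt1 (vm vp : ℤ) (hvm : vm < 0) (hvp : 0 ≤ vp)
    (a : ℤ → ℤ) (ha : ∀ k, a k = -1 ∨ a k = 0 ∨ a k = 1)
    (M MF : ℤ → ℤ) (hM0 : M 0 = 0) (hM : ∀ k, M (k + 1) = M k + a k)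
    (hMF0 : MF 0 = 0) (hMF : ∀ k, MF (k + 1) = MF k + glider vm vp a k)
    (j : ℤ) (n : ℕ) (hn : 1 ≤ n) :
    (∀ i ∈ Finset.Icc (j + 1) (j + n), MF j < MF i) ↔
      (∀ i ∈ Finset.Icc (j + 1 - vp) (j + n - vm), M (j - vp) < M i) := by
  have hle : vm ≤ vp := by omega
  have hG := MF_eq_G hvm hvp ha hM hMF0 hMF
  have step1 : (∀ i ∈ Finset.Icc (j + 1) (j + (n : ℤ)), MF j < MF i) ↔
      (∀ i ∈ Finset.Icc (j + 1) (j + (n : ℤ)), Gf vm vp hle M j < Gf vm vp hle M i) := by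
    apply forall₂_congr
    intro i _
    rw [hG j, hG i]
    omega
  rw [step1]
  constructor
  · intro h m hm
    simp only [Finset.mem_Icc] at hm
    -- find i in [j+1, j+n] with i - vp ≤ m ≤ i - vm
    obtain ⟨i, hi1, hi2, hi3, hi4⟩ : ∃ i, j + 1 ≤ i ∧ i ≤ j + (n : ℤ) ∧ i - vp ≤ m ∧ m ≤ i - vm := by
      rcases le_or_gt (m + vm) (j + 1) with hc | hc
      · exact ⟨j + 1, by omega, by omega, by omega, by omega⟩
      · exact ⟨m + vm, by omega, by omega, by omega, by omega⟩
    have h1 := h i (Finset.mem_Icc.mpr ⟨hi1, hi2⟩)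
    have h2 : Gf vm vp hle M i ≤ M m := Gf_le hle M ⟨hi3, hi4⟩
    -- Gf j < Gf i ≤ M m ; and M (j - vp) : need Gf j = M (j - vp)
    obtain ⟨m0, hm0, he0⟩ := Gf_exists hle M j
    rcases eq_or_lt_of_le hm0.1 with heq | hlt
    · rw [show j - vp = m0 by omega, ← he0]; omega
    · -- m0 in the big interval, contradiction with minimality
      have hm0big : j + 1 - vp ≤ m0 ∧ m0 ≤ j + (n : ℤ) - vm := ⟨by omega, by omega⟩
      -- use h at an index covering m0
      obtain ⟨i', hi'1, hi'2, hi'3, hi'4⟩ :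
          ∃ i', j + 1 ≤ i' ∧ i' ≤ j + (n : ℤ) ∧ i' - vp ≤ m0 ∧ m0 ≤ i' - vm := by
        rcases le_or_gt (m0 + vm) (j + 1) with hc | hc
        · exact ⟨j + 1, by omega, by omega, by omega, by omega⟩
        · exact ⟨m0 + vm, by omega, by omega, by omega, by omega⟩
      have h3 := h i' (Finset.mem_Icc.mpr ⟨hi'1, hi'2⟩)
      have h4 : Gf vm vp hle M i' ≤ M m0 := Gf_le hle M ⟨hi'3, hi'4⟩
      omega
  · intro h i hi
    simp only [Finset.mem_Icc] at hi
    obtain ⟨m1, hm1, he1⟩ := Gf_exists hle M i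
    have hbig : j + 1 - vp ≤ m1 ∧ m1 ≤ j + (n : ℤ) - vm := ⟨by omega, by omega⟩
    have h1 := h m1 (Finset.mem_Icc.mpr hbig)
    have h2 : Gf vm vp hle M j ≤ M (j - vp) := Gf_le hle M ⟨le_refl _, by omega⟩
    omega
end

section
/- For the (v₋,v₊)-gliders automaton F with v₋ < 0 ≤ v₊, for all j ∈ ℤ and all k ≥ 0: F^k(a)_j = -1 if and only if M_a(j - v₋k + 1) < min over {j - v₊k, ..., j - v₋k} of M_a. -/
open scoped Classical

lemma glider_values (vm vp : ℤ) (a : ℤ → ℤ) (j : ℤ) :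
    glider vm vp a j = -1 ∨ glider vm vp a j = 0 ∨ glider vm vp a j = 1 := by
  simp only [glider]
  split_ifs <;> simp

section Aux

variable {vm vp : ℤ} {a M : ℤ → ℤ}

lemma sum_telescope (hM : ∀ k, M (k + 1) = M k + a k) :
    ∀ (n m : ℤ), n ≤ m → M m - M n = ∑ t ∈ Finset.Icc n (m - 1), a t := by
  intro n m
  refine Int.le_induction (motive := fun m _ => M m - M n = ∑ t ∈ Finset.Icc n (m - 1), a t) ?_ ?_ m
  · show M n - M n = ∑ t ∈ Finset.Icc n (n - 1), a t
    rw [Finset.Icc_eq_empty (by omega)]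
    simp
  · intro m hm ih
    show M (m + 1) - M n = ∑ t ∈ Finset.Icc n (m + 1 - 1), a t
    have hins : Finset.Icc n m = insert m (Finset.Icc n (m - 1)) := by
      ext x
      simp only [Finset.mem_Icc, Finset.mem_insert]
      omega
    have hnotmem : m ∉ Finset.Icc n (m - 1) := by
      simp only [Finset.mem_Icc]
      omega
    rw [show m + 1 - 1 = m by ring, hins, Finset.sum_insert hnotmem, ← ih, hM m]
    ring

lemma sum_shift (hM : ∀ k, M (k + 1) = M k + a k) (j lo hi : ℤ) (h : lo ≤ hi + 1) :
    ∑ t ∈ Finset.Icc lo hi, a (j + t) = M (j + hi + 1) - M (j + lo) := by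
  rw [sum_telescope hM (j + lo) (j + hi + 1) (by omega),
    show j + hi + 1 - 1 = j + hi by ring, ← Finset.map_add_left_Icc lo hi j, Finset.sum_map]
  rfl

lemma cond1_iff (hM : ∀ k, M (k + 1) = M k + a k) (hvm : vm < 0) (hvp : 0 ≤ vp) (j : ℤ) :
    (∀ N : ℤ, N ≤ -vm → 0 ≤ ∑ t ∈ Finset.Icc (-vp + 1) N, a (j + t)) ↔
    (∀ m, j - vp + 1 ≤ m → m ≤ j - vm + 1 → M (j - vp + 1) ≤ M m) := by
  constructor
  · intro h m h1 h2
    have hs := h (m - j - 1) (by omega)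
    rw [sum_shift hM j _ _ (by omega)] at hs
    rw [show j + (m - j - 1) + 1 = m by ring, show j + (-vp + 1) = j - vp + 1 by ring] at hs
    omega
  · intro h N hN
    rcases le_or_gt (-vp) N with h' | h'
    · rw [sum_shift hM j _ _ (by omega)]
      have hs := h (j + N + 1) (by omega) (by omega)
      rw [show j + (-vp + 1) = j - vp + 1 by ring]
      omega
    · rw [Finset.Icc_eq_empty (by omega)]
      simp

lemma cond2_iff (hM : ∀ k, M (k + 1) = M k + a k) (hvm : vm < 0) (hvp : 0 ≤ vp) (j : ℤ) :
    (∀ N : ℤ, -vp ≤ N → (∑ t ∈ Finset.Icc N (-vm - 1), a (j + t)) ≤ 0) ↔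
    (∀ m, j - vp ≤ m → m ≤ j - vm → M (j - vm) ≤ M m) := by
  constructor
  · intro h m h1 h2
    have hs := h (m - j) (by omega)
    rw [sum_shift hM j _ _ (by omega)] at hs
    rw [show j + (-vm - 1) + 1 = j - vm by ring, show j + (m - j) = m by ring] at hs
    omega
  · intro h N hN
    rcases le_or_gt N (-vm) with h' | h'
    · rw [sum_shift hM j _ _ (by omega)]
      have hs := h (j + N) (by omega) (by omega)
      rw [show j + (-vm - 1) + 1 = j - vm by ring]
      omega
    · rw [Finset.Icc_eq_empty (by omega)]
      simp

lemma glider_eq_one_iff (hM : ∀ k, M (k + 1) = M k + a k) (hvm : vm < 0) (hvp : 0 ≤ vp)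
    (j : ℤ) :
    glider vm vp a j = 1 ↔
      (a (j - vp) = 1 ∧ ∀ m, j - vp + 1 ≤ m → m ≤ j - vm + 1 → M (j - vp + 1) ≤ M m) := by
  simp only [glider]
  split_ifs with h1 h2
  · exact iff_of_true rfl ⟨h1.1, (cond1_iff hM hvm hvp j).mp h1.2⟩
  · exact iff_of_false (by norm_num) (fun hr => h1 ⟨hr.1, (cond1_iff hM hvm hvp j).mpr hr.2⟩)
  · exact iff_of_false (by norm_num) (fun hr => h1 ⟨hr.1, (cond1_iff hM hvm hvp j).mpr hr.2⟩)

lemma glider_eq_neg_one_iff (ha : ∀ n, a n = -1 ∨ a n = 0 ∨ a n = 1)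
    (hM : ∀ k, M (k + 1) = M k + a k) (hvm : vm < 0) (hvp : 0 ≤ vp) (j : ℤ) :
    glider vm vp a j = -1 ↔ ∀ m, j - vp ≤ m → m ≤ j - vm → M (j - vm + 1) < M m := by
  constructor
  · intro h
    have h2 : a (j - vm) = -1 ∧ ∀ m, j - vp ≤ m → m ≤ j - vm → M (j - vm) ≤ M m := by
      by_cases hc2 : (a (j - vm) = -1 ∧
          ∀ N : ℤ, -vp ≤ N → (∑ t ∈ Finset.Icc N (-vm - 1), a (j + t)) ≤ 0)
      · exact ⟨hc2.1, (cond2_iff hM hvm hvp j).mp hc2.2⟩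
      · exfalso
        by_cases hc1 : (a (j - vp) = 1 ∧
            ∀ N : ℤ, N ≤ -vm → 0 ≤ ∑ t ∈ Finset.Icc (-vp + 1) N, a (j + t))
        · simp only [glider] at h
          rw [if_pos hc1] at h
          norm_num at h
        · simp only [glider] at h
          rw [if_neg hc1, if_neg hc2] at h
          norm_num at h
    intro m hm1 hm2
    have hma := hM (j - vm)
    have := h2.2 m hm1 hm2
    omega
  · intro h
    have hma := hM (j - vm)
    have ha' := ha (j - vm)
    have hlt := h (j - vm) (by omega) (by omega)
    have haneg : a (j - vm) = -1 := by omega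
    have hC2 : a (j - vm) = -1 ∧
        (∀ N : ℤ, -vp ≤ N → (∑ t ∈ Finset.Icc N (-vm - 1), a (j + t)) ≤ 0) :=
      ⟨haneg, (cond2_iff hM hvm hvp j).mpr (fun m h1' h2' => by
        have := h m h1' h2'; omega)⟩
    have hC1 : ¬ (a (j - vp) = 1 ∧
        (∀ N : ℤ, N ≤ -vm → 0 ≤ ∑ t ∈ Finset.Icc (-vp + 1) N, a (j + t))) := by
      rintro ⟨h1a, h1b⟩
      have h1b' := (cond1_iff hM hvm hvp j).mp h1b
      have k1 := h1b' (j - vm + 1) (by omega) (by omega)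
      have k2 := h (j - vp) (by omega) (by omega)
      have k3 := hM (j - vp)
      omega
    simp only [glider]
    rw [if_neg hC1, if_pos hC2]

end Aux

/-- Windowed minimum of `M` over `[i - vp, i - vm]`. -/
noncomputable def gwin (vm vp : ℤ) (M : ℤ → ℤ) (i : ℤ) : ℤ :=
  if h : vm ≤ vp then
    (Finset.Icc (i - vp) (i - vm)).inf' (Finset.nonempty_Icc.2 (by omega)) M
  else 0

section Gwin

variable {vm vp : ℤ} {a M : ℤ → ℤ}

lemma gwin_le (h : vm ≤ vp) {i m : ℤ} (h1 : i - vp ≤ m) (h2 : m ≤ i - vm) :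
    gwin vm vp M i ≤ M m := by
  rw [gwin, dif_pos h]
  exact Finset.inf'_le M (Finset.mem_Icc.2 ⟨h1, h2⟩)

lemma le_gwin (h : vm ≤ vp) {i c : ℤ} (hc : ∀ m, i - vp ≤ m → m ≤ i - vm → c ≤ M m) :
    c ≤ gwin vm vp M i := by
  rw [gwin, dif_pos h]
  exact Finset.le_inf' _ M fun m hm => hc m (Finset.mem_Icc.1 hm).1 (Finset.mem_Icc.1 hm).2

lemma gwin_exists (h : vm ≤ vp) (M : ℤ → ℤ) (i : ℤ) :
    ∃ m, (i - vp ≤ m ∧ m ≤ i - vm) ∧ gwin vm vp M i = M m := by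
  rw [gwin, dif_pos h]
  obtain ⟨m, hm, he⟩ := Finset.exists_mem_eq_inf' (s := Finset.Icc (i - vp) (i - vm)) (Finset.nonempty_Icc.2 (by omega)) M
  exact ⟨m, ⟨(Finset.mem_Icc.1 hm).1, (Finset.mem_Icc.1 hm).2⟩, he⟩

lemma gwin_step (ha : ∀ n, a n = -1 ∨ a n = 0 ∨ a n = 1)
    (hM : ∀ k, M (k + 1) = M k + a k) (hvm : vm < 0) (hvp : 0 ≤ vp) (i : ℤ) :
    gwin vm vp M (i + 1) = gwin vm vp M i + glider vm vp a i := by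
  have hle : vm ≤ vp := by omega
  rcases glider_values vm vp a i with h | h | h
  · rw [h]
    have hc := (glider_eq_neg_one_iff ha hM hvm hvp i).mp h
    have hMa := hM (i - vm)
    have ha' := ha (i - vm)
    have h0 := hc (i - vm) (by omega) (by omega)
    have e1 : gwin vm vp M (i + 1) ≤ M (i - vm + 1) := gwin_le hle (by omega) (by omega)
    have e2 : M (i - vm + 1) ≤ gwin vm vp M (i + 1) := le_gwin hle (fun m h1 h2 => by
      by_cases hl : m ≤ i - vm
      · have := hc m (by omega) hl; omega
      · have hm : m = i - vm + 1 := by omega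
        rw [hm])
    have f1 : gwin vm vp M i ≤ M (i - vm) := gwin_le hle (by omega) (by omega)
    have f2 : M (i - vm) ≤ gwin vm vp M i := le_gwin hle (fun m h1 h2 => by
      have := hc m h1 h2; omega)
    omega
  · rw [h, add_zero]
    apply le_antisymm
    · by_contra hlt
      push_neg at hlt
      obtain ⟨m0, ⟨hm1, hm2⟩, hval⟩ := gwin_exists hle M i
      have hm0 : m0 = i - vp := by
        by_contra hne
        have := gwin_le (M := M) hle (show (i + 1) - vp ≤ m0 by omega)
          (show m0 ≤ (i + 1) - vm by omega)
        omega
      subst hm0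
      have hkey : ∀ m, i - vp + 1 ≤ m → m ≤ i - vm + 1 → M (i - vp) < M m := fun m h1 h2 => by
        have := gwin_le (M := M) hle (show (i + 1) - vp ≤ m by omega)
          (show m ≤ (i + 1) - vm by omega)
        omega
      have hMa := hM (i - vp)
      have ha' := ha (i - vp)
      have h1 := hkey (i - vp + 1) (by omega) (by omega)
      have hA : a (i - vp) = 1 := by omega
      have hone : glider vm vp a i = 1 := (glider_eq_one_iff hM hvm hvp i).mpr
        ⟨hA, fun m hh1 hh2 => by have := hkey m hh1 hh2; omega⟩
      omega
    · by_contra hlt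
      push_neg at hlt
      obtain ⟨m0, ⟨hm1, hm2⟩, hval⟩ := gwin_exists hle M (i + 1)
      have hm0 : m0 = i - vm + 1 := by
        by_contra hne
        have := gwin_le (M := M) hle (show i - vp ≤ m0 by omega) (show m0 ≤ i - vm by omega)
        omega
      subst hm0
      have hneg : glider vm vp a i = -1 := (glider_eq_neg_one_iff ha hM hvm hvp i).mpr
        (fun m h1 h2 => by
          have := gwin_le (M := M) hle (show i - vp ≤ m by omega) h2
          omega)
      omega
  · rw [h]
    have hc := (glider_eq_one_iff hM hvm hvp i).mp h
    have hMa := hM (i - vp)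
    have hA := hc.1
    have e1 : gwin vm vp M (i + 1) ≤ M (i - vp + 1) := gwin_le hle (by omega) (by omega)
    have e2 : M (i - vp + 1) ≤ gwin vm vp M (i + 1) :=
      le_gwin hle fun m h1 h2 => hc.2 m (by omega) (by omega)
    have f1 : gwin vm vp M i ≤ M (i - vp) := gwin_le hle (by omega) (by omega)
    have f2 : M (i - vp) ≤ gwin vm vp M i := le_gwin hle (fun m h1 h2 => by
      by_cases hl : m = i - vp
      · rw [hl]
      · have := hc.2 m (by omega) (by omega); omega)
    omega

lemma window_iff (hvm : vm < 0) (hvp : 0 ≤ vp) (M : ℤ → ℤ) (L R : ℤ) (hLR : L ≤ R) :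
    (∀ i, L ≤ i → i ≤ R → gwin vm vp M (R + 1) < gwin vm vp M i) ↔
    (∀ m, L - vp ≤ m → m ≤ R - vm → M (R - vm + 1) < M m) := by
  have hle : vm ≤ vp := by omega
  constructor
  · intro hA
    have hG : gwin vm vp M (R + 1) = M (R - vm + 1) := by
      obtain ⟨m0, ⟨hm1, hm2⟩, hval⟩ := gwin_exists hle M (R + 1)
      have hm0 : m0 = R - vm + 1 := by
        by_contra hne
        have hpick : ∃ i, L ≤ i ∧ i ≤ R ∧ i - vp ≤ m0 ∧ m0 ≤ i - vm := by
          rcases le_total (m0 + vm) L with hcmp | hcmp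
          · exact ⟨L, le_rfl, hLR, by omega, by omega⟩
          · exact ⟨m0 + vm, hcmp, by omega, by omega, by omega⟩
        obtain ⟨i, hiL, hiR, hip, him⟩ := hpick
        have h1 := hA i hiL hiR
        have h2 := gwin_le (M := M) hle hip him
        omega
      subst hm0
      exact hval
    intro m hm1 hm2
    have hpick : ∃ i, L ≤ i ∧ i ≤ R ∧ i - vp ≤ m ∧ m ≤ i - vm := by
      rcases le_total (m + vm) L with hcmp | hcmp
      · exact ⟨L, le_rfl, hLR, by omega, by omega⟩
      · exact ⟨m + vm, hcmp, by omega, by omega, by omega⟩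
    obtain ⟨i, hiL, hiR, hip, him⟩ := hpick
    have h1 := hA i hiL hiR
    have h2 := gwin_le (M := M) hle hip him
    omega
  · intro hB i hi1 hi2
    have h1 : gwin vm vp M (R + 1) ≤ M (R - vm + 1) := gwin_le hle (by omega) (by omega)
    have h2 : M (R - vm + 1) < gwin vm vp M i := by
      obtain ⟨m0, ⟨hm1, hm2⟩, hval⟩ := gwin_exists hle M i
      have := hB m0 (by omega) (by omega)
      omega
    omega

end Gwin

theorem stmt3_aux (vm vp : ℤ) (hvm : vm < 0) (hvp : 0 ≤ vp) :
    ∀ (k : ℕ) (a : ℤ → ℤ), (∀ n, a n = -1 ∨ a n = 0 ∨ a n = 1) →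
    ∀ (M : ℤ → ℤ), (∀ n, M (n + 1) = M n + a n) →
    ∀ j : ℤ, ((glider vm vp)^[k] a j = -1 ↔
      ∀ i : ℤ, j - vp * k ≤ i → i ≤ j - vm * k → M (j - vm * k + 1) < M i) := by
  intro k
  induction k with
  | zero =>
    intro a ha M hM j
    simp only [Function.iterate_zero, id_eq, Nat.cast_zero, mul_zero, sub_zero]
    constructor
    · intro h i h1 h2
      have hm := hM j
      have hij : i = j := le_antisymm h2 h1
      subst hij
      omega
    · intro h
      have := h j le_rfl le_rfl
      have hm := hM j
      have := ha j
      omega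
  | succ k ih =>
    intro a ha M hM j
    rw [Function.iterate_succ_apply]
    have ha' : ∀ n, glider vm vp a n = -1 ∨ glider vm vp a n = 0 ∨ glider vm vp a n = 1 :=
      fun n => glider_values vm vp a n
    have hM' : ∀ n, gwin vm vp M (n + 1) = gwin vm vp M n + glider vm vp a n :=
      fun n => gwin_step ha hM hvm hvp n
    rw [ih (glider vm vp a) ha' (gwin vm vp M) hM' j]
    have hLR : j - vp * (k : ℤ) ≤ j - vm * (k : ℤ) := by
      have : vm * (k : ℤ) ≤ vp * (k : ℤ) :=
        mul_le_mul_of_nonneg_right (by omega) (Int.natCast_nonneg k)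
      omega
    rw [window_iff hvm hvp M (j - vp * (k : ℤ)) (j - vm * (k : ℤ)) hLR]
    push_cast
    constructor
    · intro h m h1 h2
      rw [show j - vm * ((k : ℤ) + 1) + 1 = (j - vm * (k : ℤ)) - vm + 1 by ring]
      exact h m (by linarith) (by linarith)
    · intro h m h1 h2
      rw [show (j - vm * (k : ℤ)) - vm + 1 = j - vm * ((k : ℤ) + 1) + 1 by ring]
      exact h m (by linarith) (by linarith)

theorem stmt3 (vm vp : ℤ) (hvm : vm < 0) (hvp : 0 ≤ vp)
    (a : ℤ → ℤ) (ha : ∀ k, a k = -1 ∨ a k = 0 ∨ a k = 1)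
    (M : ℤ → ℤ) (hM0 : M 0 = 0) (hM : ∀ k, M (k + 1) = M k + a k)
    (j : ℤ) (k : ℕ) :
    (glider vm vp)^[k] a j = -1 ↔
      ∀ i ∈ Finset.Icc (j - vp * k) (j - vm * k), M (j - vm * k + 1) < M i := by
  rw [stmt3_aux vm vp hvm hvp k a ha M hM j]
  constructor
  · intro h i hi
    rw [Finset.mem_Icc] at hi
    exact h i hi.1 hi.2
  · intro h i h1 h2
    exact h i (Finset.mem_Icc.2 ⟨h1, h2⟩)
end

section
/- Let f : {0,1}³ → {0,1} be the traffic automaton rule (rule 184): f(u₋₁,u₀,u₁) = 1 if (u₋₁ = 1 and u₀ = 0) or (u₀ = 1 and u₁ = 1), and 0 otherwise. Let F be the cellular automaton on {0,1}^ℤ defined by F(a)_z = f(a_{z−1}, a_z, a_{z+1}). Let π : {0,1}^ℤ → {−1,0,+1}^ℤ be the sliding block code with π(a)_k = +1 if a_k = a_{k+1} = 0, π(a)_k = −1 if a_k = a_{k+1} = 1, and π(a)_k = 0 if a_k ≠ a_{k+1}. Then π ∘ F = G ∘ π, where G is the (−1,1)-gliders automaton. -/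
open scoped Classical

/-- The traffic automaton (Wolfram rule 184) on {0,1}^ℤ. -/
def traffic (a : ℤ → ℤ) : ℤ → ℤ := fun z =>
  if (a (z - 1) = 1 ∧ a z = 0) ∨ (a z = 1 ∧ a (z + 1) = 1) then 1 else 0

/-- The factor map onto the gliders automaton. -/
def trafficPi (a : ℤ → ℤ) : ℤ → ℤ := fun k =>
  if a k = 0 ∧ a (k + 1) = 0 then 1
  else if a k = 1 ∧ a (k + 1) = 1 then -1
  else 0


lemma glider_eq (b : ℤ → ℤ) (j : ℤ) :
    glider (-1) 1 b j =
      if b (j-1) = 1 ∧ 0 ≤ b j ∧ 0 ≤ b j + b (j+1) then 1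
      else if b (j+1) = -1 ∧ b j ≤ 0 ∧ b (j-1) + b j ≤ 0 then -1
      else 0 := by
  have e1 : Finset.Icc (0:ℤ) 1 = {0, 1} := by decide
  have e2 : Finset.Icc (-1:ℤ) 0 = {-1, 0} := by decide
  have h1 : (∀ N : ℤ, N ≤ 1 → 0 ≤ ∑ x ∈ Finset.Icc 0 N, b (j + x)) ↔
      (0 ≤ b j ∧ 0 ≤ b j + b (j+1)) := by
    constructor
    · intro h
      refine ⟨by simpa using h 0 (by norm_num), ?_⟩
      have := h 1 le_rfl
      rw [e1, Finset.sum_pair (by decide)] at this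
      simpa using this
    · rintro ⟨h0, h01⟩ N hN
      rcases lt_trichotomy N 0 with h | h | h
      · rw [Finset.Icc_eq_empty (by omega), Finset.sum_empty]
      · subst h; simpa using h0
      · have : N = 1 := by omega
        subst this
        rw [e1, Finset.sum_pair (by decide)]
        simpa using h01
  have h2 : (∀ N : ℤ, -1 ≤ N → (∑ x ∈ Finset.Icc N 0, b (j + x)) ≤ 0) ↔
      (b j ≤ 0 ∧ b (j-1) + b j ≤ 0) := by
    constructor
    · intro h
      refine ⟨by simpa using h 0 (by norm_num), ?_⟩
      have := h (-1) le_rfl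
      rw [e2, Finset.sum_pair (by decide)] at this
      rw [show j - 1 = j + -1 by ring]
      simpa using this
    · rintro ⟨h0, h01⟩ N hN
      rcases lt_trichotomy 0 N with h | h | h
      · rw [Finset.Icc_eq_empty (by omega), Finset.sum_empty]
      · subst h; simpa using h0
      · have : N = -1 := by omega
        subst this
        rw [e2, Finset.sum_pair (by decide)]
        rw [show j - 1 = j + -1 by ring] at h01
        simpa using h01
  unfold glider
  norm_num
  rw [if_congr (and_congr_right' h1) rfl (if_congr (and_congr_right' h2) rfl rfl)]

theorem stmt11 (a : ℤ → ℤ) (ha : ∀ k, a k = 0 ∨ a k = 1) :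
    trafficPi (traffic a) = glider (-1) 1 (trafficPi a) := by
  funext j
  rw [glider_eq]
  have e1 : j - 1 + 1 = j := by ring
  have e2 : j + 1 - 1 = j := by ring
  have e3 : j + 1 + 1 = j + 2 := by ring
  obtain h1 | h1 := ha (j-1) <;> obtain h2 | h2 := ha j <;>
    obtain h3 | h3 := ha (j+1) <;> obtain h4 | h4 := ha (j+2) <;>
    simp [trafficPi, traffic, e1, e2, e3, h1, h2, h3, h4]
end
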